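/- arXiv:2008.11267 — 3 statements merged into one kernel-verified Lean document; each statement's English description precedes it below -/
import Mathlib

section
/- If p : L → X is a lifting projection and γ : I → X is a path, then the map f_γ : p⁻¹(γ(0)) → p⁻¹(γ(1)) sending l to the endpoint ⟨γ,l⟩(1) of the unique lift of γ starting at l is a homeomorphism, with inverse given by lifting the reverse path γ̄. -/
open unitInterval

universe u v

variable {L X K B : Type u} [TopologicalSpace L] [TopologicalSpace X] [TopologicalSpace K]
  [TopologicalSpace B]

/-- `X^I ⊓ L`: pairs `(γ, l)` of a path in `X` and a point of `L` with `p l = γ 0`,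
topologized as a subspace of `C(I, X) × L` (compact-open topology on path spaces). -/
def Sqcap (p : L → X) : Type u :=
  {q : C(I, X) × L // p q.2 = q.1 0}

instance (p : L → X) : TopologicalSpace (Sqcap p) := by unfold Sqcap; infer_instance

/-- The canonical map `p̄ : L^I → X^I ⊓ L`, `γ ↦ (p ∘ γ, γ 0)`. -/
def pbar {p : L → X} (hp : Continuous p) : C(I, L) → Sqcap p :=
  fun γ => ⟨(⟨p ∘ γ, hp.comp γ.continuous⟩, γ 0), rfl⟩

/-- A lifting projection is a continuous map `p` such that `p̄` is a homeomorphism. -/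
def IsLiftingProjection (p : L → X) : Prop :=
  ∃ hp : Continuous p, IsHomeomorph (pbar hp)

/-- A Hurewicz fibration: a continuous map with the homotopy lifting property with
respect to all spaces. -/
def IsHurewiczFibration (p : L → X) : Prop :=
  Continuous p ∧
    ∀ (Y : Type u) (_ : TopologicalSpace Y) (H : Y × I → X) (h₀ : Y → L),
      Continuous H → Continuous h₀ → (∀ y, p (h₀ y) = H (y, 0)) →
        ∃ G : Y × I → L, Continuous G ∧ (∀ z, p (G z) = H z) ∧ (∀ y, G (y, 0) = h₀ y)
/-- For a lifting projection `p` and a path `γ` in `X`, the map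
`f_γ : p⁻¹(γ 0) → p⁻¹(γ 1)`, sending `l` to the endpoint `⟨γ,l⟩(1)` of the unique lift
of `γ` starting at `l`, is a homeomorphism whose inverse is given by lifting the
reverse path `γ̄`. -/
theorem fibreTranslation_isHomeomorph {p : L → X} (hp : IsLiftingProjection p)
    (lift : ∀ (γ : C(I, X)) (l : L), p l = γ 0 → C(I, L))
    (hlift : ∀ (γ : C(I, X)) (l : L) (h : p l = γ 0),
      (∀ s, p (lift γ l h s) = γ s) ∧ lift γ l h 0 = l)
    (γ : C(I, X)) :
    ∃ F : {l : L // p l = γ 0} ≃ₜ {l : L // p l = γ 1},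
      (∀ l : {l : L // p l = γ 0}, (F l : L) = lift γ l.1 l.2 1) ∧
      (∀ l : {l : L // p l = γ 1},
        (F.symm l : L) =
          lift (γ.comp ⟨σ, continuous_symm⟩) l.1
            (by simpa using l.2) 1) := by
  obtain ⟨hc, hhom⟩ := hp
  obtain ⟨e, he⟩ := isHomeomorph_iff_exists_homeomorph.mp hhom
  -- the lift is given by e.symm
  have hkey : ∀ (δ : C(I, X)) (l : L) (h : p l = δ 0),
      lift δ l h = e.symm ⟨(δ, l), h⟩ := by
    intro δ l h
    have h2 : e (lift δ l h) = ⟨(δ, l), h⟩ := by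
      rw [show (⇑e : C(I, L) → Sqcap p) = pbar hc from he]
      unfold pbar
      apply Subtype.ext
      apply Prod.ext
      · ext s; exact (hlift δ l h).1 s
      · exact (hlift δ l h).2
    rw [← e.symm_apply_apply (lift δ l h), h2]
  -- uniqueness of lifts
  have uniq : ∀ (δ₁ δ₂ : C(I, L)), (∀ s, p (δ₁ s) = p (δ₂ s)) → δ₁ 0 = δ₂ 0 → δ₁ = δ₂ := by
    intro δ₁ δ₂ hps h0
    apply hhom.bijective.injective
    unfold pbar
    apply Subtype.ext
    apply Prod.ext
    · ext s; exact hps s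
    · exact h0
  set γr : C(I, X) := γ.comp ⟨σ, continuous_symm⟩ with hγr
  have hγr0 : γr 0 = γ 1 := by simp [hγr]
  have hγr1 : γr 1 = γ 0 := by simp [hγr]
  have hγrs : ∀ s, γr s = γ (σ s) := fun s => rfl
  have hpr0 : ∀ l : {l : L // p l = γ 1}, p l.1 = γr 0 := fun l => by rw [hγr0]; exact l.2
  set fwd : {l : L // p l = γ 0} → {l : L // p l = γ 1} := fun l =>
    ⟨lift γ l.1 l.2 1, (hlift γ l.1 l.2).1 1⟩ with hfwd
  set bwd : {l : L // p l = γ 1} → {l : L // p l = γ 0} := fun l =>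
    ⟨lift γr l.1 (hpr0 l) 1, by rw [(hlift γr l.1 (hpr0 l)).1 1, hγr1]⟩ with hbwd
  have hli : Function.LeftInverse bwd fwd := by
    intro l
    set δ := lift γ l.1 l.2 with hδ
    have h1 : p (δ 1) = γr 0 := by rw [(hlift γ l.1 l.2).1 1, hγr0]
    have key : lift γr (δ 1) h1 = δ.comp ⟨σ, continuous_symm⟩ := by
      apply uniq
      · intro s
        rw [(hlift γr (δ 1) h1).1 s]
        show γr s = p (δ (σ s))
        rw [(hlift γ l.1 l.2).1 (σ s), hγrs]
      · rw [(hlift γr (δ 1) h1).2]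
        show δ 1 = δ (σ 0)
        rw [symm_zero]
    apply Subtype.ext
    show lift γr (δ 1) _ 1 = l.1
    rw [key]
    show δ (σ 1) = l.1
    rw [show (σ 1 : I) = 0 by simp, (hlift γ l.1 l.2).2]
  have hri : Function.RightInverse bwd fwd := by
    intro l
    set δ := lift γr l.1 (hpr0 l) with hδ
    have h1 : p (δ 1) = γ 0 := by rw [(hlift γr l.1 (hpr0 l)).1 1, hγr1]
    have key : lift γ (δ 1) h1 = δ.comp ⟨σ, continuous_symm⟩ := by
      apply uniq
      · intro s
        rw [(hlift γ (δ 1) h1).1 s]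
        show γ s = p (δ (σ s))
        rw [(hlift γr l.1 (hpr0 l)).1 (σ s), hγrs]
        simp
      · rw [(hlift γ (δ 1) h1).2]
        show δ 1 = δ (σ 0)
        rw [symm_zero]
    apply Subtype.ext
    show lift γ (δ 1) _ 1 = l.1
    rw [key]
    show δ (σ 1) = l.1
    rw [show (σ 1 : I) = 0 by simp, (hlift γr l.1 (hpr0 l)).2]
  have cfwd : Continuous fwd := by
    rw [hfwd]
    refine Continuous.subtype_mk ?_ _
    simp only [hkey]
    exact (continuous_eval_const 1).comp
      (e.symm.continuous.comp (Continuous.subtype_mk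
        (continuous_const.prodMk continuous_subtype_val) _))
  have cbwd : Continuous bwd := by
    rw [hbwd]
    refine Continuous.subtype_mk ?_ _
    simp only [hkey]
    exact (continuous_eval_const 1).comp
      (e.symm.continuous.comp (Continuous.subtype_mk
        (continuous_const.prodMk continuous_subtype_val) _))
  exact ⟨⟨⟨fwd, bwd, hli, hri⟩, cfwd, cbwd⟩, fun l => rfl, fun l => rfl⟩
end

section
/- If f : L → K is a fibre-preserving map between lifting projections p : L → X and q : K → X (i.e. q∘f = p), then f itself is a lifting projection. -/
open unitInterval

universe u v

variable {L X K B : Type u} [TopologicalSpace L] [TopologicalSpace X] [TopologicalSpace K]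
  [TopologicalSpace B]

/-- A fibre-preserving continuous map between lifting projections over
the same base is itself a lifting projection. -/
theorem IsLiftingProjection.of_fibrePreserving {p : L → X} {q : K → X} {f : L → K}
    (hf : Continuous f) (hp : IsLiftingProjection p) (hq : IsLiftingProjection q)
    (hcomm : ∀ l, q (f l) = p l) :
    IsLiftingProjection f := by
  obtain ⟨hpc, hph⟩ := hp
  obtain ⟨hqc, hqh⟩ := hq
  refine ⟨hf, ?_⟩
  rw [isHomeomorph_iff_exists_inverse]
  -- the homeomorphisms associated to p and q
  let P : C(I, L) ≃ₜ Sqcap p := hph.homeomorph _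
  let Q : C(I, K) ≃ₜ Sqcap q := hqh.homeomorph _
  -- the continuous map φ : Sqcap f → Sqcap p, (γ, l) ↦ (q ∘ γ, l)
  have hφcont : Continuous fun x : Sqcap f =>
      ((⟨(⟨q ∘ x.1.1, hqc.comp x.1.1.continuous⟩, x.1.2),
        by rw [← hcomm]; exact congrArg q x.2⟩ : Sqcap p)) := by
    apply Continuous.subtype_mk
    exact ((ContinuousMap.continuous_postcomp ⟨q, hqc⟩).comp
      (continuous_fst.comp continuous_subtype_val)).prodMk
      (continuous_snd.comp continuous_subtype_val)
  set φ : Sqcap f → Sqcap p := fun x =>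
    ⟨(⟨q ∘ x.1.1, hqc.comp x.1.1.continuous⟩, x.1.2),
      by rw [← hcomm]; exact congrArg q x.2⟩ with hφ
  refine ⟨?_, P.symm ∘ φ, ?_, ?_, (P.symm.continuous).comp hφcont⟩
  · -- continuity of fbar hf
    apply Continuous.subtype_mk
    exact (ContinuousMap.continuous_postcomp ⟨f, hf⟩).prodMk (continuous_eval_const 0)
  · -- left inverse
    intro δ
    have hkey : φ (pbar hf δ) = pbar hpc δ := by
      apply Subtype.ext
      refine Prod.ext ?_ rfl
      ext t
      exact hcomm (δ t)
    have : P.symm (φ (pbar hf δ)) = P.symm (pbar hpc δ) := congrArg _ hkey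
    exact this.trans (P.symm_apply_apply δ)
  · -- right inverse
    intro x
    obtain ⟨⟨γ, l⟩, hx⟩ := x
    set δ : C(I, L) := P.symm (φ ⟨(γ, l), hx⟩) with hδ
    have hPδ : pbar hpc δ = φ ⟨(γ, l), hx⟩ := by
      exact P.apply_symm_apply (φ ⟨(γ, l), hx⟩)
    have h1 : (⟨p ∘ δ, hpc.comp δ.continuous⟩ : C(I, X)) = ⟨q ∘ γ, hqc.comp γ.continuous⟩ := by
      have := congrArg (fun y : Sqcap p => y.1.1) hPδ
      simpa [pbar, φ] using this
    have h2 : δ 0 = l := by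
      have := congrArg (fun y : Sqcap p => y.1.2) hPδ
      simpa [pbar, φ] using this
    -- show f ∘ δ = γ using injectivity of qbar
    have hfδ : (⟨f ∘ δ, hf.comp δ.continuous⟩ : C(I, K)) = γ := by
      apply Q.injective
      apply Subtype.ext
      refine Prod.ext ?_ ?_
      · ext t
        show q (f (δ t)) = q (γ t)
        rw [hcomm]
        exact congrFun (congrArg ContinuousMap.toFun h1) t
      · show f (δ 0) = γ 0
        rw [h2]; exact hx
    show pbar hf δ = ⟨(γ, l), hx⟩
    apply Subtype.ext
    exact Prod.ext hfδ h2
end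

section
/- Let (L_i, u_{ij}) and (X_i, v_{ij}) be inverse systems of topological spaces over a directed set I, and p : (L_i) → (X_i) a level morphism such that each p_i : L_i → X_i is a lifting projection. Then the limit map lim p_i : lim L_i → lim X_i is a lifting projection. -/
open unitInterval

universe u v

variable {L X K B : Type u} [TopologicalSpace L] [TopologicalSpace X] [TopologicalSpace K]
  [TopologicalSpace B]

/-- The inverse limit of a level morphism of inverse systems of
topological spaces, all of whose levels are lifting projections, is a lifting
projection between the inverse limits. -/
theorem isLiftingProjection_invLimit {ι : Type v} [Preorder ι]
    [IsDirected ι (· ≤ ·)] {Lf Xf : ι → Type u}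
    [∀ i, TopologicalSpace (Lf i)] [∀ i, TopologicalSpace (Xf i)]
    (uL : ∀ i j, i ≤ j → Lf j → Lf i) (uX : ∀ i j, i ≤ j → Xf j → Xf i)
    (huL : ∀ i j (h : i ≤ j), Continuous (uL i j h))
    (huX : ∀ i j (h : i ≤ j), Continuous (uX i j h))
    (huLid : ∀ i (l : Lf i), uL i i le_rfl l = l)
    (huXid : ∀ i (x : Xf i), uX i i le_rfl x = x)
    (huLcomp : ∀ i j k (hij : i ≤ j) (hjk : j ≤ k) (l : Lf k),
      uL i j hij (uL j k hjk l) = uL i k (hij.trans hjk) l)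
    (huXcomp : ∀ i j k (hij : i ≤ j) (hjk : j ≤ k) (x : Xf k),
      uX i j hij (uX j k hjk x) = uX i k (hij.trans hjk) x)
    (p : ∀ i, Lf i → Xf i) (hp : ∀ i, IsLiftingProjection (p i))
    (hcomm : ∀ i j (h : i ≤ j) (l : Lf j), uX i j h (p j l) = p i (uL i j h l)) :
    IsLiftingProjection
      (fun l : {l : ∀ i, Lf i // ∀ i j (h : i ≤ j), uL i j h (l j) = l i} =>
        (⟨fun i => p i (l.1 i), fun i j h => by
            rw [hcomm i j h, l.2 i j h]⟩ :
          {x : ∀ i, Xf i // ∀ i j (h : i ≤ j), uX i j h (x j) = x i})) := by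
  classical
  choose hpc hph using hp
  let S := {l : ∀ i, Lf i // ∀ i j (h : i ≤ j), uL i j h (l j) = l i}
  let T := {x : ∀ i, Xf i // ∀ i j (h : i ≤ j), uX i j h (x j) = x i}
  let P : S → T := fun l =>
    ⟨fun i => p i (l.1 i), fun i j h => by rw [hcomm i j h, l.2 i j h]⟩
  show IsLiftingProjection P
  have hPc : Continuous P := Continuous.subtype_mk
    (continuous_pi fun i => (hpc i).comp ((continuous_apply i).comp continuous_subtype_val)) _
  refine ⟨hPc, ?_⟩
  let e : ∀ i, C(I, Lf i) ≃ₜ Sqcap (p i) := fun i => (hph i).homeomorph _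
  have he : ∀ i γ, e i γ = pbar (hpc i) γ := fun i γ => rfl
  -- projection continuous maps
  let projT : ∀ i, C(T, Xf i) :=
    fun i => ⟨fun x => x.1 i, (continuous_apply i).comp continuous_subtype_val⟩
  let projS : ∀ i, C(S, Lf i) :=
    fun i => ⟨fun x => x.1 i, (continuous_apply i).comp continuous_subtype_val⟩
  have hq2 : ∀ (q : Sqcap P) i, p i (q.1.2.1 i) = (q.1.1 0).1 i := fun q i =>
    congrFun (congrArg Subtype.val q.2) i
  let qi : Sqcap P → ∀ i, Sqcap (p i) := fun q i =>
    ⟨((projT i).comp q.1.1, q.1.2.1 i), hq2 q i⟩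
  let lam : Sqcap P → ∀ i, C(I, Lf i) := fun q i => (e i).symm (qi q i)
  have hlam : ∀ q i, pbar (hpc i) (lam q i) = qi q i := fun q i =>
    (e i).apply_symm_apply (qi q i)
  have hlam1 : ∀ q i (t : I), p i (lam q i t) = (q.1.1 t).1 i := fun q i t => by
    have h := congrArg (fun z : Sqcap (p i) => z.1.1 t) (hlam q i)
    simpa [pbar, qi, projT] using h
  have hlam0 : ∀ q i, lam q i 0 = q.1.2.1 i := fun q i =>
    congrArg (fun z : Sqcap (p i) => z.1.2) (hlam q i)
  have hlamcomp : ∀ q i j (h : i ≤ j) (t : I), uL i j h (lam q j t) = lam q i t := by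
    intro q i j h t
    have key : pbar (hpc i) ((⟨uL i j h, huL i j h⟩ : C(Lf j, Lf i)).comp (lam q j)) = qi q i := by
      apply Subtype.ext
      apply Prod.ext
      · ext s
        show p i (uL i j h (lam q j s)) = (q.1.1 s).1 i
        rw [← hcomm i j h, hlam1 q j s, (q.1.1 s).2 i j h]
      · show uL i j h (lam q j 0) = q.1.2.1 i
        rw [hlam0 q j, q.1.2.2 i j h]
    have keq : (⟨uL i j h, huL i j h⟩ : C(Lf j, Lf i)).comp (lam q j) = lam q i :=
      (e i).injective (key.trans (hlam q i).symm)
    exact congrArg (fun γ : C(I, Lf i) => γ t) keq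
  let g : Sqcap P → C(I, S) := fun q =>
    ⟨fun t => ⟨fun i => lam q i t, fun i j h => hlamcomp q i j h t⟩,
     Continuous.subtype_mk (continuous_pi fun i => (lam q i).continuous) _⟩
  have hqi : ∀ i, Continuous (fun q => qi q i) := fun i =>
    Continuous.subtype_mk
      (((ContinuousMap.continuous_postcomp (projT i)).comp
          (continuous_fst.comp continuous_subtype_val)).prodMk
        ((continuous_apply i).comp
          (continuous_subtype_val.comp (continuous_snd.comp continuous_subtype_val)))) _
  have hg : Continuous g := by
    apply ContinuousMap.continuous_of_continuous_uncurry
    apply Continuous.subtype_mk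
    apply continuous_pi
    intro i
    exact continuous_eval.comp
      ((((e i).symm.continuous.comp (hqi i)).comp continuous_fst).prodMk continuous_snd)
  have hpbarc : Continuous (pbar hPc) :=
    Continuous.subtype_mk
      ((ContinuousMap.continuous_postcomp (⟨P, hPc⟩ : C(S, T))).prodMk
        (continuous_eval_const 0)) _
  have hleft : Function.LeftInverse g (pbar hPc) := by
    intro γ
    ext t i
    have hkey : qi (pbar hPc γ) i = e i ((projS i).comp γ) := by
      apply Subtype.ext
      apply Prod.ext
      · rfl
      · rfl
    have h1 : lam (pbar hPc γ) i = (projS i).comp γ := by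
      show (e i).symm (qi (pbar hPc γ) i) = _
      rw [hkey, Homeomorph.symm_apply_apply]
    exact congrArg (fun f : C(I, Lf i) => f t) h1
  have hright : Function.RightInverse g (pbar hPc) := by
    intro q
    apply Subtype.ext
    apply Prod.ext
    · ext t i
      exact hlam1 q i t
    · show g q 0 = q.1.2
      apply Subtype.ext
      funext i
      exact hlam0 q i
  exact (Homeomorph.mk ⟨pbar hPc, g, hleft, hright⟩ hpbarc hg).isHomeomorph
end
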